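/- Suppose A a² + D(b² − c²) = 0. Then: (i) if A a² + C a² ≤ D c², then x = 1 is a maximizer of γ on [0,1] and the maximum value is A a² + C a²; (ii) if D c² < A a² + C a² < 2(bc + c²)D, then x = c√D / √((a√C − b√D)² + D c²) is a maximizer of γ on [0,1] and the maximum value is D(A + C)a²c² / ((a√C − b√D)² + D c²); (iii) if A a² + C a² ≥ 2(bc + c²)D, then x = 1/√2 is a maximizer of γ on [0,1] and the maximum value is (bc + c²)D. -/

import Mathlib

lemma aux_mono {x y : ℝ} (hy : 0 ≤ y) (hxy : y ≤ x) (hx1 : x ≤ 1) (h : 1/2 ≤ y^2) :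
    x * Real.sqrt (1 - x^2) ≤ y * Real.sqrt (1 - y^2) := by
  have hx0 : 0 ≤ x := hy.trans hxy
  rw [show x * Real.sqrt (1 - x^2) = Real.sqrt (x^2 * (1-x^2)) by
        rw [Real.sqrt_mul (sq_nonneg x), Real.sqrt_sq hx0],
      show y * Real.sqrt (1 - y^2) = Real.sqrt (y^2 * (1-y^2)) by
        rw [Real.sqrt_mul (sq_nonneg y), Real.sqrt_sq hy]]
  apply Real.sqrt_le_sqrt
  have h1 : y^2 ≤ x^2 := by nlinarith
  nlinarith [mul_nonneg (sub_nonneg.2 h1) (show (0:ℝ) ≤ x^2 + y^2 - 1 by nlinarith)]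

lemma aux_half {x : ℝ} (hx0 : 0 ≤ x) (hx1 : x ≤ 1) : x * Real.sqrt (1 - x^2) ≤ 1/2 := by
  have h : (0:ℝ) ≤ 1 - x^2 := by nlinarith
  nlinarith [sq_nonneg (x - Real.sqrt (1 - x^2)), Real.sq_sqrt h, Real.sqrt_nonneg (1 - x^2)]

set_option maxHeartbeats 1600000 in
theorem beamforming_scenario_zero (a b c A C D : ℝ)
    (ha : 0 < a) (hb : 0 < b) (hc : 0 < c) (hA : 0 < A) (hC : 0 < C) (hD : 0 < D)
    (hK : A * a ^ 2 + D * (b ^ 2 - c ^ 2) = 0) :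
    (let γ : ℝ → ℝ := fun x =>
      min ((A * a ^ 2 + C * a ^ 2) * x ^ 2)
        ((A * a ^ 2 + D * (b ^ 2 - c ^ 2)) * x ^ 2
          + 2 * D * b * c * x * Real.sqrt (1 - x ^ 2) + D * c ^ 2);
    (A * a ^ 2 + C * a ^ 2 ≤ D * c ^ 2 →
      (1 : ℝ) ∈ Set.Icc (0:ℝ) 1 ∧ IsMaxOn γ (Set.Icc (0:ℝ) 1) 1 ∧
      γ 1 = A * a ^ 2 + C * a ^ 2) ∧
    (D * c ^ 2 < A * a ^ 2 + C * a ^ 2 ∧ A * a ^ 2 + C * a ^ 2 < 2 * (b * c + c ^ 2) * D →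
      c * Real.sqrt D / Real.sqrt ((a * Real.sqrt C - b * Real.sqrt D) ^ 2 + D * c ^ 2)
        ∈ Set.Icc (0:ℝ) 1 ∧
      IsMaxOn γ (Set.Icc (0:ℝ) 1)
        (c * Real.sqrt D / Real.sqrt ((a * Real.sqrt C - b * Real.sqrt D) ^ 2 + D * c ^ 2)) ∧
      γ (c * Real.sqrt D / Real.sqrt ((a * Real.sqrt C - b * Real.sqrt D) ^ 2 + D * c ^ 2))
        = D * (A + C) * a ^ 2 * c ^ 2
            / ((a * Real.sqrt C - b * Real.sqrt D) ^ 2 + D * c ^ 2)) ∧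
    (2 * (b * c + c ^ 2) * D ≤ A * a ^ 2 + C * a ^ 2 →
      (1 / Real.sqrt 2 : ℝ) ∈ Set.Icc (0:ℝ) 1 ∧
      IsMaxOn γ (Set.Icc (0:ℝ) 1) (1 / Real.sqrt 2) ∧
      γ (1 / Real.sqrt 2) = (b * c + c ^ 2) * D)) := by
  intro γ
  have hP : 0 < A * a ^ 2 + C * a ^ 2 := by positivity
  have hsC : Real.sqrt C ^ 2 = C := Real.sq_sqrt hC.le
  have hsD : Real.sqrt D ^ 2 = D := Real.sq_sqrt hD.le
  have hsC0 : 0 < Real.sqrt C := Real.sqrt_pos.2 hC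
  have hsD0 : 0 < Real.sqrt D := Real.sqrt_pos.2 hD
  have unfold : ∀ t : ℝ, γ t = min ((A * a ^ 2 + C * a ^ 2) * t ^ 2)
      (2 * D * b * c * t * Real.sqrt (1 - t ^ 2) + D * c ^ 2) := by
    intro t
    simp only [γ, hK, zero_mul, zero_add]
  refine ⟨?_, ?_, ?_⟩
  · -- Case (i)
    intro h
    have hγ1 : γ 1 = A * a ^ 2 + C * a ^ 2 := by
      rw [unfold, show (1:ℝ) - 1 ^ 2 = 0 by norm_num, Real.sqrt_zero,
        show 2 * D * b * c * 1 * 0 + D * c ^ 2 = D * c ^ 2 by ring, one_pow, mul_one]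
      exact min_eq_left h
    refine ⟨by norm_num, ?_, hγ1⟩
    intro x hx
    obtain ⟨hx0, hx1⟩ := hx
    have hx2 : x ^ 2 ≤ 1 := pow_le_one₀ hx0 hx1
    simp only [Set.mem_setOf_eq, hγ1]
    calc γ x ≤ (A * a ^ 2 + C * a ^ 2) * x ^ 2 := by rw [unfold]; exact min_le_left _ _
      _ ≤ A * a ^ 2 + C * a ^ 2 := mul_le_of_le_one_right hP.le hx2
  · -- Case (ii)
    rintro ⟨h1, h2⟩
    set E : ℝ := a * Real.sqrt C - b * Real.sqrt D with hEdef
    set S : ℝ := E ^ 2 + D * c ^ 2 with hSdef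
    have hDc : D * c ^ 2 = A * a ^ 2 + D * b ^ 2 := by linarith [hK]
    have hE : 0 < E := by
      have hlt : b * Real.sqrt D < a * Real.sqrt C := by
        have : (b * Real.sqrt D) ^ 2 < (a * Real.sqrt C) ^ 2 := by
          rw [mul_pow, mul_pow, hsC, hsD]; linarith
        exact lt_of_pow_lt_pow_left₀ 2 (by positivity) this
      rw [hEdef]; linarith
    have hS : 0 < S := by positivity
    set r : ℝ := Real.sqrt S with hrdef
    have hr : r ^ 2 = S := Real.sq_sqrt hS.le
    have hr0 : 0 < r := Real.sqrt_pos.2 hS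
    set x₀ : ℝ := c * Real.sqrt D / r with hx₀def
    have hx₀0 : 0 < x₀ := by positivity
    have hx₀sq : x₀ ^ 2 = D * c ^ 2 / S := by
      rw [hx₀def, div_pow, hr, mul_pow, hsD]; ring_nf
    have hx₀1 : x₀ ≤ 1 := by
      rw [hx₀def, div_le_one hr0, hrdef]
      calc c * Real.sqrt D = Real.sqrt (D * c ^ 2) := by
            rw [Real.sqrt_mul hD.le, Real.sqrt_sq hc.le]; ring
        _ ≤ Real.sqrt S := Real.sqrt_le_sqrt (by rw [hSdef]; linarith [sq_nonneg E])
    have hsub : (1:ℝ) - x₀ ^ 2 = (E / r) ^ 2 := by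
      rw [hx₀sq, div_pow, hr, hSdef]
      field_simp; ring
    have hsqrt : Real.sqrt (1 - x₀ ^ 2) = E / r := by
      rw [hsub, Real.sqrt_sq (by positivity)]
    have e1 : (A * a ^ 2 + C * a ^ 2) * x₀ ^ 2
        = D * (A + C) * a ^ 2 * c ^ 2 / S := by
      rw [hx₀sq]; field_simp
    have e2 : 2 * D * b * c * x₀ * Real.sqrt (1 - x₀ ^ 2) + D * c ^ 2
        = D * (A + C) * a ^ 2 * c ^ 2 / S := by
      rw [hsqrt, hx₀def,
        show 2 * D * b * c * (c * Real.sqrt D / r) * (E / r)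
          = 2 * D * b * c * (c * Real.sqrt D) * E / (r * r) by ring,
        show r * r = S by rw [← hr]; ring,
        div_add' _ _ _ hS.ne']
      have hnum : 2 * D * b * c * (c * Real.sqrt D) * E + D * c ^ 2 * S
          = D * (A + C) * a ^ 2 * c ^ 2 := by
        rw [hSdef, hEdef]
        linear_combination D * a^2 * c^2 * hsC - D * b^2 * c^2 * hsD + D * c^2 * hDc
      rw [hnum]
    have hval : γ x₀ = D * (A + C) * a ^ 2 * c ^ 2 / S := by
      rw [unfold, e1, e2, min_self]
    clear_value E S r x₀
    refine ⟨Set.mem_Icc.mpr ⟨hx₀0.le, hx₀1⟩, ?_, hval⟩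
    intro x hx
    obtain ⟨hx0, hx1⟩ := hx
    simp only [Set.mem_setOf_eq, hval]
    rcases le_total x x₀ with hle | hge
    · calc γ x ≤ (A * a ^ 2 + C * a ^ 2) * x ^ 2 := by rw [unfold]; exact min_le_left _ _
        _ ≤ (A * a ^ 2 + C * a ^ 2) * x₀ ^ 2 :=
            mul_le_mul_of_nonneg_left (pow_le_pow_left₀ hx0 hle 2) hP.le
        _ = D * (A + C) * a ^ 2 * c ^ 2 / S := e1
    · have hEc : E < c * Real.sqrt D := by
        have hlt : a * Real.sqrt C < (b + c) * Real.sqrt D := by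
          have : (a * Real.sqrt C) ^ 2 < ((b + c) * Real.sqrt D) ^ 2 := by
            rw [mul_pow, mul_pow, hsC, hsD]; linarith
          exact lt_of_pow_lt_pow_left₀ 2 (by positivity) this
        rw [hEdef]; linarith
      have hE2 : E ^ 2 < D * c ^ 2 := by
        have hmm := mul_lt_mul'' hEc hEc hE.le hE.le
        have hcd : (c * Real.sqrt D) * (c * Real.sqrt D) = D * c ^ 2 := by
          rw [show (c * Real.sqrt D) * (c * Real.sqrt D) = Real.sqrt D ^ 2 * c ^ 2 by ring, hsD]
        rw [pow_two]; linarith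
      have hhalf : 1/2 ≤ x₀ ^ 2 := by
        rw [hx₀sq, le_div_iff₀ hS, hSdef]; linarith
      have hmono := mul_le_mul_of_nonneg_left (aux_mono hx₀0.le hge hx1 hhalf)
        (show (0:ℝ) ≤ 2 * D * b * c by positivity)
      calc γ x ≤ 2 * D * b * c * x * Real.sqrt (1 - x ^ 2) + D * c ^ 2 := by
            rw [unfold]; exact min_le_right _ _
        _ ≤ 2 * D * b * c * x₀ * Real.sqrt (1 - x₀ ^ 2) + D * c ^ 2 := by linarith
        _ = D * (A + C) * a ^ 2 * c ^ 2 / S := e2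
  · -- Case (iii)
    intro h
    have h2 : Real.sqrt 2 ^ 2 = 2 := Real.sq_sqrt (by norm_num)
    have hs20 : 0 < Real.sqrt 2 := Real.sqrt_pos.2 (by norm_num)
    have hs21 : 1 ≤ Real.sqrt 2 := by
      rw [show (1:ℝ) = Real.sqrt 1 from Real.sqrt_one.symm]
      exact Real.sqrt_le_sqrt (by norm_num)
    have hxsq : (1 / Real.sqrt 2) ^ 2 = 1 / 2 := by rw [div_pow, h2]; norm_num
    have hsqrt : Real.sqrt (1 - (1 / Real.sqrt 2) ^ 2) = 1 / Real.sqrt 2 := by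
      rw [show (1:ℝ) - (1 / Real.sqrt 2) ^ 2 = (1 / Real.sqrt 2) ^ 2 by rw [hxsq]; norm_num,
        Real.sqrt_sq (by positivity)]
    have hγv : γ (1 / Real.sqrt 2) = (b * c + c ^ 2) * D := by
      rw [unfold, hsqrt, hxsq,
        show 2 * D * b * c * (1 / Real.sqrt 2) * (1 / Real.sqrt 2)
          = 2 * D * b * c / (Real.sqrt 2 * Real.sqrt 2) by ring,
        Real.mul_self_sqrt (by norm_num : (0:ℝ) ≤ 2)]
      rw [min_eq_right (by linarith)]
      ring
    refine ⟨Set.mem_Icc.mpr ⟨by positivity, ?_⟩, ?_, hγv⟩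
    · rw [div_le_one hs20]; exact hs21
    · intro x hx
      obtain ⟨hx0, hx1⟩ := hx
      simp only [Set.mem_setOf_eq, hγv]
      have hm := mul_le_mul_of_nonneg_left (aux_half hx0 hx1)
        (show (0:ℝ) ≤ 2 * D * b * c by positivity)
      calc γ x ≤ 2 * D * b * c * x * Real.sqrt (1 - x ^ 2) + D * c ^ 2 := by
            rw [unfold]; exact min_le_right _ _
        _ ≤ (b * c + c ^ 2) * D := by linarith
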